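/- arXiv:1112.2480 — 3 statements merged into one kernel-verified Lean document; each statement's English description precedes it below -/
import Mathlib

section
/- If x, y, θ : ℝ → ℝ satisfy x' = cos θ, y' = sin θ, θ' = sin(2θ)(−x cos θ + y sin θ)/(1 + x² + y²) with x(0) = y(0) = 0 and θ(0) = θ₀, then the functions x̄(s) = −x(−s), ȳ(s) = −y(−s), θ̄(s) = θ(−s) satisfy the same system with the same initial conditions; consequently x(−s) = −x(s) and y(−s) = −y(s) for all s, i.e., the generating curve is symmetric with respect to the origin. -/
/-- The ODE system for generating curves of 3-invariant minimal surfaces in Sol₃. -/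
def MinimalSys (x y θ : ℝ → ℝ) : Prop :=
  (∀ s, HasDerivAt x (Real.cos (θ s)) s) ∧
  (∀ s, HasDerivAt y (Real.sin (θ s)) s) ∧
  (∀ s, HasDerivAt θ
    (Real.sin (2 * θ s) * (-(x s) * Real.cos (θ s) + y s * Real.sin (θ s)) /
      (1 + (x s) ^ 2 + (y s) ^ 2)) s)

/-- If (x, y, θ) solves the system with x(0) = y(0) = 0, θ(0) = θ₀, and is the unique
such solution, then (s ↦ −x(−s), s ↦ −y(−s), s ↦ θ(−s)) solves the same system with
the same initial conditions; consequently x(−s) = −x(s) and y(−s) = −y(s) for all s: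
the generating curve is symmetric with respect to the origin. -/
theorem minimalSys_origin_symmetry (x y θ : ℝ → ℝ) (θ₀ : ℝ)
    (hsys : MinimalSys x y θ) (hx0 : x 0 = 0) (hy0 : y 0 = 0) (hθ0 : θ 0 = θ₀)
    (huniq : ∀ x' y' θ' : ℝ → ℝ, MinimalSys x' y' θ' →
      x' 0 = 0 → y' 0 = 0 → θ' 0 = θ₀ → x' = x ∧ y' = y ∧ θ' = θ) :
    MinimalSys (fun s => -x (-s)) (fun s => -y (-s)) (fun s => θ (-s)) ∧
    ((fun s => -x (-s)) 0 = 0 ∧ (fun s => -y (-s)) 0 = 0 ∧ (fun s => θ (-s)) 0 = θ₀) ∧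
    (∀ s : ℝ, x (-s) = -x s ∧ y (-s) = -y s) := by
  obtain ⟨hx, hy, hθ⟩ := hsys
  have hsys' : MinimalSys (fun s => -x (-s)) (fun s => -y (-s)) (fun s => θ (-s)) := by
    refine ⟨fun s => ?_, fun s => ?_, fun s => ?_⟩
    · have h := ((hx (-s)).comp s (hasDerivAt_neg s)).neg
      exact h.congr_deriv (by ring)
    · have h := ((hy (-s)).comp s (hasDerivAt_neg s)).neg
      exact h.congr_deriv (by ring)
    · have h := (hθ (-s)).comp s (hasDerivAt_neg s)
      exact h.congr_deriv (by ring)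
  refine ⟨hsys', ⟨by simp [hx0], by simp [hy0], by simpa using hθ0⟩, fun s => ?_⟩
  obtain ⟨hx', hy', _⟩ := huniq _ _ _ hsys' (by simp [hx0]) (by simp [hy0]) (by simpa using hθ0)
  constructor
  · have := congrFun hx' s
    linarith
  · have := congrFun hy' s
    linarith
end

section
/- Let (x, y, θ) be a solution on ℝ of x' = cos θ, y' = sin θ, θ' = sin(2θ)(−x cos θ + y sin θ)/(1 + x² + y²). If θ(s₀) ≡ 0 (mod π) for some s₀, then θ is constant (equal to that value mod π) on all of ℝ, and the curve s ↦ (x(s), y(s)) is a horizontal straight line. -/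
open Real

/-- Grönwall-type vanishing, forward in time. -/
lemma zero_forward (f f' : ℝ → ℝ) (hf : ∀ s, HasDerivAt f (f' s) s)
    (hb : ∀ s, |f' s| ≤ 2 * |f s|) (a : ℝ) (h0 : f a = 0) :
    ∀ t, a ≤ t → f t = 0 := by
  intro t ht
  have hcont : ContinuousOn f (Set.Icc a t) :=
    fun s _ => ((hf s).continuousAt).continuousWithinAt
  have key := norm_le_gronwallBound_of_norm_deriv_right_le (δ := 0) (K := 2) (ε := 0)
    hcont (fun s _ => (hf s).hasDerivWithinAt) (by simp [h0])
    (fun s _ => by simpa using hb s)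
  have := key t ⟨ht, le_rfl⟩
  rw [gronwallBound_ε0_δ0] at this
  exact norm_le_zero_iff.mp this

lemma zero_of_deriv_le (f f' : ℝ → ℝ) (hf : ∀ s, HasDerivAt f (f' s) s)
    (hb : ∀ s, |f' s| ≤ 2 * |f s|) (s₀ : ℝ) (h0 : f s₀ = 0) : ∀ s, f s = 0 := by
  intro s
  rcases le_total s₀ s with hle | hle
  · exact zero_forward f f' hf hb s₀ h0 s hle
  · -- backward: consider g t = f (2 s₀ - t)
    set g : ℝ → ℝ := fun t => f (2 * s₀ - t) with hg
    have hg' : ∀ t, HasDerivAt g (-(f' (2 * s₀ - t))) t := by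
      intro t
      have hlin : HasDerivAt (fun t : ℝ => 2 * s₀ - t) (-1) t := by
        exact (hasDerivAt_id' t).const_sub (2 * s₀)
      have h2 : HasDerivAt g (f' (2 * s₀ - t) * (-1)) t := (hf (2 * s₀ - t)).comp t hlin
      simpa using h2
    have hgb : ∀ t, |(-(f' (2 * s₀ - t)))| ≤ 2 * |g t| := by
      intro t; simpa [hg, abs_neg] using hb (2 * s₀ - t)
    have hg0 : g s₀ = 0 := by simp [hg, two_mul, h0]
    have h3 := zero_forward g _ hg' hgb s₀ hg0 (2 * s₀ - s) (by linarith)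
    simp only [hg] at h3
    rw [show 2 * s₀ - (2 * s₀ - s) = s by ring] at h3
    exact h3

/-- If a solution of the minimal-surface ODE system satisfies θ(s₀) ≡ 0 (mod π) at some
point s₀, then θ is constant on ℝ and the curve s ↦ (x(s), y(s)) is a horizontal
straight line (y is constant and x moves at unit speed). -/
theorem minimalSys_theta_multiple_pi (x y θ : ℝ → ℝ) (s₀ : ℝ)
    (hsys : MinimalSys x y θ) (h : ∃ k : ℤ, θ s₀ = k * Real.pi) :
    (∀ s, θ s = θ s₀) ∧ (∀ s, y s = y s₀) ∧
    (∀ s, x s = x s₀ + Real.cos (θ s₀) * (s - s₀)) := by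
  obtain ⟨hx, hy, hθ⟩ := hsys
  obtain ⟨k, hk⟩ := h
  -- Let f = sin ∘ θ
  set D : ℝ → ℝ := fun s => 1 + (x s) ^ 2 + (y s) ^ 2 with hD
  have hDpos : ∀ s, 0 < D s := fun s => by positivity
  set F : ℝ → ℝ := fun s =>
    Real.sin (2 * θ s) * (-(x s) * Real.cos (θ s) + y s * Real.sin (θ s)) / D s with hF
  set f : ℝ → ℝ := fun s => Real.sin (θ s) with hf
  have hf' : ∀ s, HasDerivAt f (Real.cos (θ s) * F s) s := by
    intro s
    exact (Real.hasDerivAt_sin (θ s)).comp s (hθ s)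
  -- bound |f'| ≤ 2 |f|
  have hbound : ∀ s, |Real.cos (θ s) * F s| ≤ 2 * |f s| := by
    intro s
    have h1 : Real.sin (2 * θ s) = 2 * Real.sin (θ s) * Real.cos (θ s) :=
      Real.sin_two_mul (θ s)
    have hxb : |x s| ≤ D s / 2 := by
      have : (|x s| - 1) ^ 2 ≥ 0 := sq_nonneg _
      have h2 : |x s| ^ 2 = (x s) ^ 2 := sq_abs _
      nlinarith [sq_nonneg (y s), sq_nonneg (|x s| - 1)]
    have hyb : |y s| ≤ D s / 2 := by
      nlinarith [sq_nonneg (x s), sq_nonneg (|y s| - 1), sq_abs (y s)]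
    have hnum : |(-(x s) * Real.cos (θ s) + y s * Real.sin (θ s))| ≤ D s := by
      calc |(-(x s) * Real.cos (θ s) + y s * Real.sin (θ s))|
          ≤ |(-(x s)) * Real.cos (θ s)| + |y s * Real.sin (θ s)| := abs_add_le _ _
        _ ≤ |x s| * 1 + |y s| * 1 := by
            rw [abs_mul, abs_mul, abs_neg]
            gcongr <;> first | exact Real.abs_cos_le_one _ | exact Real.abs_sin_le_one _
        _ ≤ D s / 2 + D s / 2 := by simpa using add_le_add hxb hyb
        _ = D s := by ring
    have hcos : |Real.cos (θ s)| ≤ 1 := Real.abs_cos_le_one _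
    have : |Real.cos (θ s) * F s|
        = |Real.cos (θ s)| ^ 2 * (2 * |f s|) *
          (|(-(x s) * Real.cos (θ s) + y s * Real.sin (θ s))| / D s) := by
      simp only [hF, hf, abs_mul, abs_div, abs_of_pos (hDpos s), h1, abs_two]
      ring
    rw [this]
    have hfrac : |(-(x s) * Real.cos (θ s) + y s * Real.sin (θ s))| / D s ≤ 1 :=
      (div_le_one (hDpos s)).mpr hnum
    calc |Real.cos (θ s)| ^ 2 * (2 * |f s|) *
          (|(-(x s) * Real.cos (θ s) + y s * Real.sin (θ s))| / D s)
        ≤ 1 ^ 2 * (2 * |f s|) * 1 := by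
          gcongr
        _ = 2 * |f s| := by ring
  have hf0 : f s₀ = 0 := by simp [hf, hk, Real.sin_int_mul_pi]
  have hfz : ∀ s, f s = 0 := zero_of_deriv_le f _ hf' hbound s₀ hf0
  -- θ' = 0 everywhere
  have hθ' : ∀ s, HasDerivAt θ 0 s := by
    intro s
    have : Real.sin (2 * θ s) = 0 := by
      rw [Real.sin_two_mul]
      have := hfz s
      simp only [hf] at this
      simp [this]
    simpa [this] using hθ s
  have hθconst : ∀ s, θ s = θ s₀ := by
    have hd : Differentiable ℝ θ := fun s => (hθ' s).differentiableAt
    have hz : ∀ s, deriv θ s = 0 := fun s => (hθ' s).deriv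
    exact fun s => is_const_of_deriv_eq_zero hd hz s s₀
  refine ⟨hθconst, ?_, ?_⟩
  · -- y constant
    have hy' : ∀ s, HasDerivAt y 0 s := by
      intro s
      have hs : Real.sin (θ s) = 0 := hfz s
      simpa [hs] using hy s
    have hd : Differentiable ℝ y := fun s => (hy' s).differentiableAt
    exact fun s => is_const_of_deriv_eq_zero hd (fun s => (hy' s).deriv) s s₀
  · -- x linear
    intro s
    set c := Real.cos (θ s₀) with hc
    set g : ℝ → ℝ := fun t => x t - c * t with hg
    have hg' : ∀ t, HasDerivAt g 0 t := by
      intro t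
      have := (hx t).sub ((hasDerivAt_id t).const_mul c)
      simp only [hθconst t, mul_one, ← hc, sub_self] at this
      exact this
    have hd : Differentiable ℝ g := fun t => (hg' t).differentiableAt
    have := is_const_of_deriv_eq_zero hd (fun t => (hg' t).deriv) s s₀
    simp only [hg] at this
    linarith [this]
end

section
/- Let y : I → ℝ be a twice differentiable function on an open interval I containing 0, satisfying y'' = 2y'(yy' − x)/(1 + x² + y²), with y(0) = 0 and 0 < y'(0) < 1. Then on I ∩ [0,∞): (a) y'(x) > 0 for all x; (b) y(x)y'(x) − x < 0 for all x > 0, hence y''(x) < 0 for x > 0; (c) y'(x) < y'(0) < 1 for x > 0; (d) y(x) < x for all x > 0. -/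
open Set Filter

/-- Let y solve y'' = 2y'(yy' − x)/(1 + x² + y²) on an open interval I = (a,b) ∋ 0,
with y(0) = 0 and 0 < y'(0) < 1. Then on I ∩ [0,∞):
(a) y' > 0; (b) yy' − x < 0 and y'' < 0 for x > 0; (c) y' < y'(0) < 1 for x > 0;
(d) y < x for x > 0. -/
theorem minimal_graph_properties (a b : ℝ) (ha : a < 0) (hb : 0 < b)
    (y y' y'' : ℝ → ℝ)
    (hy : ∀ x ∈ Set.Ioo a b, HasDerivAt y (y' x) x)
    (hy' : ∀ x ∈ Set.Ioo a b, HasDerivAt y' (y'' x) x)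
    (heq : ∀ x ∈ Set.Ioo a b,
      y'' x = 2 * y' x * (y x * y' x - x) / (1 + x ^ 2 + (y x) ^ 2))
    (h0 : y 0 = 0) (h1 : 0 < y' 0) (h2 : y' 0 < 1) :
    ∀ x ∈ Set.Ioo a b, 0 ≤ x →
      (0 < y' x) ∧
      (0 < x → y x * y' x - x < 0 ∧ y'' x < 0) ∧
      (0 < x → y' x < y' 0) ∧
      (0 < x → y x < x) := by
  have h0mem : (0:ℝ) ∈ Set.Ioo a b := ⟨ha, hb⟩
  have hden : ∀ t : ℝ, 0 < 1 + t ^ 2 + (y t) ^ 2 := fun t => by positivity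
  have hyc : ContinuousOn y (Set.Ioo a b) :=
    fun t ht => ((hy t ht).continuousAt).continuousWithinAt
  have hy'c : ContinuousOn y' (Set.Ioo a b) :=
    fun t ht => ((hy' t ht).continuousAt).continuousWithinAt
  set p : ℝ → ℝ := fun t => 2 * (y t * y' t - t) / (1 + t ^ 2 + (y t) ^ 2) with hpdef
  have hpc : ContinuousOn p (Set.Ioo a b) := by
    apply ContinuousOn.div
    · exact continuousOn_const.mul ((hyc.mul hy'c).sub continuousOn_id)
    · exact (continuousOn_const.add (continuousOn_id.pow 2)).add (hyc.pow 2)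
    · exact fun t _ => (hden t).ne'
  have heq' : ∀ t ∈ Set.Ioo a b, y'' t = y' t * p t := by
    intro t ht
    rw [heq t ht, hpdef]
    ring
  set P : ℝ → ℝ := fun u => ∫ t in (0:ℝ)..u, p t with hPdef
  have hP : ∀ t ∈ Set.Ioo a b, HasDerivAt P (p t) t := by
    intro t ht
    have hsub : Set.uIcc 0 t ⊆ Set.Ioo a b := Set.ordConnected_Ioo.uIcc_subset h0mem ht
    exact intervalIntegral.integral_hasDerivAt_right
      (hpc.mono hsub).intervalIntegrable
      (hpc.stronglyMeasurableAtFilter isOpen_Ioo t ht)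
      (hpc.continuousAt (isOpen_Ioo.mem_nhds ht))
  set g : ℝ → ℝ := fun u => y' u * Real.exp (-P u) with hgdef
  have hg : ∀ t ∈ Set.Ioo a b, HasDerivAt g 0 t := by
    intro t ht
    have hd := (hy' t ht).mul (((hP t ht).neg).exp)
    refine hd.congr_deriv ?_
    rw [heq' t ht]
    ring
  -- (a): positivity of y' on [0, b)
  have hpos : ∀ t ∈ Set.Ioo a b, 0 ≤ t → 0 < y' t := by
    intro t ht ht0
    have hIcc : Set.Icc 0 t ⊆ Set.Ioo a b := fun s hs =>
      ⟨lt_of_lt_of_le ha hs.1, lt_of_le_of_lt hs.2 ht.2⟩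
    have hgconst := constant_of_has_deriv_right_zero
      (f := g)
      (fun s hs => ((hg s (hIcc hs)).continuousAt).continuousWithinAt)
      (fun s hs => ((hg s (hIcc (Set.mem_Icc_of_Ico hs))).hasDerivWithinAt))
      t (Set.right_mem_Icc.2 ht0)
    have hP0 : P 0 = 0 := by simp [hPdef]
    have hgt : y' t * Real.exp (-P t) = y' 0 := by
      simpa [hgdef, hP0] using hgconst
    nlinarith [Real.exp_pos (-P t)]
  -- monotonicity package given negativity of y y' - x on (0, c)
  have hanti : ∀ c, 0 < c → c < b → (∀ t, 0 < t → t < c → y t * y' t - t < 0) →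
      StrictAntiOn y' (Set.Icc 0 c) ∧ StrictMonoOn (fun u => u - y u) (Set.Icc 0 c) ∧
        StrictMonoOn y (Set.Icc 0 c) := by
    intro c hc0 hcb hneg
    have hIcc : Set.Icc 0 c ⊆ Set.Ioo a b := fun s hs =>
      ⟨lt_of_lt_of_le ha hs.1, lt_of_le_of_lt hs.2 hcb⟩
    have hy''neg : ∀ t ∈ Set.Ioo 0 c, y'' t < 0 := by
      intro t ht
      have htI : t ∈ Set.Ioo a b := hIcc ⟨ht.1.le, ht.2.le⟩
      rw [heq t htI]
      apply div_neg_of_neg_of_pos _ (hden t)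
      have h3 := hpos t htI ht.1.le
      nlinarith [hneg t ht.1 ht.2]
    have hA : StrictAntiOn y' (Set.Icc 0 c) := by
      apply strictAntiOn_of_deriv_neg (convex_Icc 0 c) (hy'c.mono hIcc)
      intro t ht
      rw [interior_Icc] at ht
      rw [(hy' t (hIcc (Set.Ioo_subset_Icc_self ht))).deriv]
      exact hy''neg t ht
    have hM : StrictMonoOn (fun u => u - y u) (Set.Icc 0 c) := by
      apply strictMonoOn_of_deriv_pos (f := fun u => u - y u) (convex_Icc 0 c)
        (fun s hs => (continuousWithinAt_id.sub ((hyc.mono hIcc) s hs)))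
      intro t ht
      rw [interior_Icc] at ht
      have htI : t ∈ Set.Ioo a b := hIcc (Set.Ioo_subset_Icc_self ht)
      have hd : HasDerivAt (fun u => u - y u) (1 - y' t) t := (hasDerivAt_id t).sub (hy t htI)
      rw [hd.deriv]
      have : y' t < y' 0 := hA (Set.left_mem_Icc.2 hc0.le) (Set.Ioo_subset_Icc_self ht) ht.1
      linarith
    have hMy : StrictMonoOn y (Set.Icc 0 c) := by
      apply strictMonoOn_of_deriv_pos (convex_Icc 0 c) (hyc.mono hIcc)
      intro t ht
      rw [interior_Icc] at ht
      have htI : t ∈ Set.Ioo a b := hIcc (Set.Ioo_subset_Icc_self ht)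
      rw [(hy t htI).deriv]
      exact hpos t htI ht.1.le
    exact ⟨hA, hM, hMy⟩
  -- near zero: y y' - x < 0 on (0, ε)
  have hnear : ∃ ε > 0, ∀ t, 0 < t → t < ε → y t * y' t - t < 0 := by
    have hh0 : HasDerivAt (fun t => y t * y' t - t) (y' 0 * y' 0 + y 0 * y'' 0 - 1) 0 :=
      ((hy 0 h0mem).mul (hy' 0 h0mem)).sub (hasDerivAt_id 0)
    have hd0neg : y' 0 * y' 0 + y 0 * y'' 0 - 1 < 0 := by
      rw [h0]; nlinarith
    have hslope := hasDerivAt_iff_tendsto_slope.mp hh0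
    have hslope' : Tendsto (slope (fun t => y t * y' t - t) 0) (nhdsWithin 0 (Set.Ioi 0))
        (nhds (y' 0 * y' 0 + y 0 * y'' 0 - 1)) :=
      hslope.mono_left (nhdsWithin_mono 0 (fun t ht => ne_of_gt ht))
    have hev : ∀ᶠ t in nhdsWithin (0:ℝ) (Set.Ioi 0),
        slope (fun t => y t * y' t - t) 0 t < 0 :=
      hslope'.eventually_lt_const hd0neg
    obtain ⟨u, hu, hsubu⟩ := mem_nhdsGT_iff_exists_Ioo_subset.mp hev
    refine ⟨u, hu, fun t ht0 htu => ?_⟩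
    have hst := hsubu ⟨ht0, htu⟩
    rw [Set.mem_setOf_eq, slope_def_field] at hst
    rw [h0] at hst
    have ht' : (y t * y' t - t - (0 * y' 0 - 0)) / (t - 0) < 0 := hst
    rw [zero_mul, sub_zero, sub_zero, sub_zero] at ht'
    have := mul_neg_of_neg_of_pos ht' ht0
    rwa [div_mul_cancel₀ _ (ne_of_gt ht0)] at this
  -- the main claim: y y' - x < 0 on (0, b)
  have hmainneg : ∀ t, 0 < t → t < b → y t * y' t - t < 0 := by
    by_contra hcon
    push_neg at hcon
    obtain ⟨x₀, hx₀pos, hx₀b, hx₀h⟩ := hcon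
    set B := {t : ℝ | 0 < t ∧ t < b ∧ 0 ≤ y t * y' t - t} with hBdef
    have hx₀B : x₀ ∈ B := ⟨hx₀pos, hx₀b, hx₀h⟩
    have hBne : B.Nonempty := ⟨x₀, hx₀B⟩
    have hBbdd : BddBelow B := ⟨0, fun t ht => ht.1.le⟩
    set c := sInf B with hcdef
    obtain ⟨ε, hε, hεneg⟩ := hnear
    have hcε : ε ≤ c := by
      apply le_csInf hBne
      intro t ht
      by_contra hlt
      push_neg at hlt
      exact absurd (hεneg t ht.1 hlt) (not_lt.2 ht.2.2)
    have hc0 : 0 < c := lt_of_lt_of_le hε hcε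
    have hcb : c < b := lt_of_le_of_lt (csInf_le hBbdd hx₀B) hx₀b
    have hcI : c ∈ Set.Ioo a b := ⟨lt_trans ha hc0, hcb⟩
    have hclt : ∀ t, 0 < t → t < c → y t * y' t - t < 0 := by
      intro t ht0 htc
      by_contra hge
      push_neg at hge
      have htB : t ∈ B := ⟨ht0, htc.trans hcb, hge⟩
      exact absurd (csInf_le hBbdd htB) (not_le.2 htc)
    have hchge : 0 ≤ y c * y' c - c := by
      by_contra hlt
      push_neg at hlt
      have hcont : ContinuousAt (fun t => y t * y' t - t) c :=
        ((hy c hcI).continuousAt.mul (hy' c hcI).continuousAt).sub continuousAt_id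
      have hev : ∀ᶠ t in nhds c, y t * y' t - t < 0 :=
        (hcont.tendsto).eventually_lt_const hlt
      obtain ⟨r, hr, hball⟩ := Metric.eventually_nhds_iff.mp hev
      obtain ⟨t, htB, htlt⟩ : ∃ t ∈ B, t < c + r := by
        by_contra hno
        push_neg at hno
        have : c + r ≤ c := le_csInf hBne hno
        linarith
      have hct : c ≤ t := csInf_le hBbdd htB
      have hdist : dist t c < r := by
        rw [Real.dist_eq, abs_of_nonneg (by linarith)]
        linarith
      exact absurd (hball hdist) (not_lt.2 htB.2.2)
    obtain ⟨hA, hM, hMy⟩ := hanti c hc0 hcb hclt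
    have hl : (0:ℝ) ∈ Set.Icc 0 c := Set.left_mem_Icc.2 hc0.le
    have hrr : c ∈ Set.Icc 0 c := Set.right_mem_Icc.2 hc0.le
    have hy'clt : y' c < y' 0 := hA hl hrr hc0
    have hycpos : 0 < y c := by
      have := hMy hl hrr hc0
      rwa [h0] at this
    have hyclt : y c < c := by
      have := hM hl hrr hc0
      simp only [h0, sub_zero] at this
      linarith
    have hy'cpos : 0 < y' c := hpos c hcI hc0.le
    nlinarith [mul_pos hycpos (sub_pos.2 (hy'clt.trans h2)),
      mul_pos (sub_pos.2 hyclt) hy'cpos]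
  -- conclusion
  intro x hx hx0
  refine ⟨hpos x hx hx0, ?_, ?_, ?_⟩
  · intro hx0'
    have hneg := hmainneg x hx0' hx.2
    refine ⟨hneg, ?_⟩
    rw [heq x hx]
    apply div_neg_of_neg_of_pos _ (hden x)
    have := hpos x hx hx0
    nlinarith
  · intro hx0'
    obtain ⟨hA, _, _⟩ := hanti x hx0' hx.2 (fun t ht htx => hmainneg t ht (htx.trans hx.2))
    exact hA (Set.left_mem_Icc.2 hx0) (Set.right_mem_Icc.2 hx0) hx0'
  · intro hx0'
    obtain ⟨_, hM, _⟩ := hanti x hx0' hx.2 (fun t ht htx => hmainneg t ht (htx.trans hx.2))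
    have := hM (Set.left_mem_Icc.2 hx0) (Set.right_mem_Icc.2 hx0) hx0'
    simp only [h0, sub_zero] at this
    linarith
end
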